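/- For a word w ∈ F_2 the following are equivalent: (a) w lies in the third term γ_3(F_2) of the lower central series of F_2 (equivalently, w represents the identity in the discrete Heisenberg group, the free two-step nilpotent group on two generators); (b) φ(w) = 0 in ℤ² (the path traced by w on the lattice is closed) and S(D(w)) = 0, where S(γ) = Σ_{m∈ℤ²} m_1·γ(m,2) is the algebraic (oriented) area enclosed by the closed path of w. -/

import Mathlib

/-- The lattice `ℤ²`. -/
abbrev Z2 : Type := Fin 2 → ℤ

/-- Edge chains of the grid complex `E²` (Cayley graph of `ℤ²`). -/
abbrev C1Z2 : Type := (Z2 × Fin 2) →₀ ℤ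

/-- Translation action of `v ∈ ℤ²` on edge chains: `v • δ_{(m,i)} = δ_{(m+v,i)}`. -/
noncomputable def shiftZ (v : Z2) : C1Z2 →+ C1Z2 :=
  Finsupp.mapDomain.addMonoidHom fun p => (v + p.1, p.2)

/-- The abelianization homomorphism `φ : F₂ → ℤ²`. -/
def phiZ : FreeGroup (Fin 2) →* Multiplicative Z2 :=
  FreeGroup.lift fun i => Multiplicative.ofAdd (Pi.single i 1)

/-- The algebraic (oriented) area `S(γ) = Σ_{m ∈ ℤ²} m₁ · γ(m, 2)`. -/
noncomputable def Sarea : C1Z2 →+ ℤ :=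
  Finsupp.liftAddHom fun p =>
    zmultiplesHom ℤ (if p.2 = 1 then p.1 0 else 0)

open scoped commutatorElement

/-- The discrete Heisenberg group. -/
@[ext] structure Hei where
  a : Z2
  s : ℤ

instance : Group Hei where
  mul p q := ⟨p.a + q.a, p.s + q.s + p.a 0 * q.a 1⟩
  one := ⟨0, 0⟩
  inv p := ⟨-p.a, -p.s + p.a 0 * p.a 1⟩
  mul_assoc p q r := by
    ext j
    · show (p.a + q.a + r.a) j = (p.a + (q.a + r.a)) j
      simp [add_assoc]
    · show p.s + q.s + p.a 0 * q.a 1 + r.s + (p.a + q.a) 0 * r.a 1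
        = p.s + (q.s + r.s + q.a 0 * r.a 1) + p.a 0 * (q.a + r.a) 1
      simp [Pi.add_apply]; ring
  one_mul p := by
    ext j
    · show ((0 : Z2) + p.a) j = p.a j; simp
    · show 0 + p.s + (0 : Z2) 0 * p.a 1 = p.s; simp
  mul_one p := by
    ext j
    · show (p.a + (0 : Z2)) j = p.a j; simp
    · show p.s + 0 + p.a 0 * (0 : Z2) 1 = p.s; simp
  inv_mul_cancel p := by
    ext j
    · show (-p.a + p.a) j = (0 : Z2) j
      simp
    · show -p.s + p.a 0 * p.a 1 + p.s + (-p.a) 0 * p.a 1 = 0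
      have : (-p.a) 0 = -(p.a 0) := rfl
      rw [this]; ring

lemma Hei.mul_def (p q : Hei) : p * q = ⟨p.a + q.a, p.s + q.s + p.a 0 * q.a 1⟩ := rfl
lemma Hei.inv_def (p : Hei) : p⁻¹ = ⟨-p.a, -p.s + p.a 0 * p.a 1⟩ := rfl
lemma Hei.one_def : (1 : Hei) = ⟨0, 0⟩ := rfl

/-- Total vertical displacement `T(γ) = Σ_m γ(m,2)`. -/
noncomputable def Tver : C1Z2 →+ ℤ :=
  Finsupp.liftAddHom fun p => zmultiplesHom ℤ (if p.2 = 1 then 1 else 0)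

lemma Sarea_single (p : Z2 × Fin 2) (n : ℤ) :
    Sarea (Finsupp.single p n) = n * (if p.2 = 1 then p.1 0 else 0) := by
  simp [Sarea, Finsupp.liftAddHom_apply_single, zmultiplesHom_apply, smul_eq_mul]

lemma Tver_single (p : Z2 × Fin 2) (n : ℤ) :
    Tver (Finsupp.single p n) = n * (if p.2 = 1 then 1 else 0) := by
  simp [Tver, Finsupp.liftAddHom_apply_single, zmultiplesHom_apply, smul_eq_mul]

lemma shiftZ_single (v : Z2) (p : Z2 × Fin 2) (n : ℤ) :
    shiftZ v (Finsupp.single p n) = Finsupp.single (v + p.1, p.2) n := by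
  simp [shiftZ, Finsupp.mapDomain.addMonoidHom_apply, Finsupp.mapDomain_single]

lemma Tver_shift (v : Z2) (γ : C1Z2) : Tver (shiftZ v γ) = Tver γ := by
  induction γ using Finsupp.induction with
  | zero => simp
  | single_add p n f _ _ ih =>
      rw [map_add, map_add, map_add, ih, shiftZ_single, Tver_single, Tver_single]

lemma Sarea_shift (v : Z2) (γ : C1Z2) :
    Sarea (shiftZ v γ) = Sarea γ + v 0 * Tver γ := by
  induction γ using Finsupp.induction with
  | zero => simp
  | single_add p n f _ _ ih =>
      rw [map_add, map_add, map_add, map_add, ih, shiftZ_single, Sarea_single,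
        Sarea_single, Tver_single]
      rcases p with ⟨m, i⟩
      by_cases hi : i = 1 <;> simp [hi, Pi.add_apply] <;> ring

/-- The homomorphism `F₂ → Hei`. -/
noncomputable def Psi : FreeGroup (Fin 2) →* Hei :=
  FreeGroup.lift fun i => ⟨Pi.single i 1, 0⟩

/-- First coordinate of `Hei` as a homomorphism. -/
def heiFst : Hei →* Multiplicative Z2 where
  toFun p := Multiplicative.ofAdd p.a
  map_one' := rfl
  map_mul' p q := by
    show Multiplicative.ofAdd (p.a + q.a) = _
    rw [ofAdd_add]

lemma Psi_a (w : FreeGroup (Fin 2)) : (Psi w).a = Multiplicative.toAdd (phiZ w) := by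
  have : heiFst.comp Psi = phiZ := by
    apply FreeGroup.ext_hom
    intro i
    simp [heiFst, Psi, phiZ]
  have h := congrArg (fun f => Multiplicative.toAdd (f w)) this
  simpa [heiFst] using h

section Dlemmas
variable (D : FreeGroup (Fin 2) → C1Z2)
  (hD1 : ∀ i : Fin 2, D (FreeGroup.of i) = Finsupp.single ((0 : Z2), i) 1)
  (hDmul : ∀ u v : FreeGroup (Fin 2),
      D (u * v) = D u + shiftZ (Multiplicative.toAdd (phiZ u)) (D v))

include hDmul in
lemma D_one : D 1 = 0 := by
  have h := hDmul 1 1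
  rw [mul_one] at h
  have hsh : shiftZ (Multiplicative.toAdd (phiZ 1)) (D 1) = D 1 := by
    rw [map_one]
    show shiftZ 0 (D 1) = D 1
    rw [shiftZ]
    rw [Finsupp.mapDomain.addMonoidHom_apply]
    have : (fun p : Z2 × Fin 2 => ((0 : Z2) + p.1, p.2)) = id := by
      funext p; simp
    rw [this, Finsupp.mapDomain_id]
  rw [hsh] at h
  exact (left_eq_add.mp h)

include hD1 hDmul in
lemma D_key (w : FreeGroup (Fin 2)) :
    Sarea (D w) = (Psi w).s ∧ Tver (D w) = (Psi w).a 1 := by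
  have hinv : ∀ u : FreeGroup (Fin 2),
      (Sarea (D u) = (Psi u).s ∧ Tver (D u) = (Psi u).a 1) →
      (Sarea (D u⁻¹) = (Psi u⁻¹).s ∧ Tver (D u⁻¹) = (Psi u⁻¹).a 1) := by
    intro u ⟨hS, hT⟩
    have h := hDmul u u⁻¹
    rw [mul_inv_cancel, D_one D hDmul] at h
    have h2 : shiftZ (Multiplicative.toAdd (phiZ u)) (D u⁻¹) = -D u := by
      rw [eq_neg_iff_add_eq_zero, add_comm]; exact h.symm
    have hTi : Tver (D u⁻¹) = -(Psi u).a 1 := by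
      have := congrArg Tver h2
      rwa [Tver_shift, map_neg, hT] at this
    have hSi : Sarea (D u⁻¹) = -(Psi u).s + (Psi u).a 0 * (Psi u).a 1 := by
      have := congrArg Sarea h2
      rw [Sarea_shift, map_neg, hS, hTi, ← Psi_a] at this
      linarith
    constructor
    · rw [hSi, map_inv]; rfl
    · rw [hTi, map_inv, Hei.inv_def]
      show _ = (-(Psi u).a) 1
      simp
  induction w using FreeGroup.induction_on with
  | C1 => rw [D_one D hDmul]; simp [Hei.one_def]
  | of i =>
      have hof : Psi (FreeGroup.of i) = ⟨Pi.single i 1, 0⟩ := FreeGroup.lift_apply_of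
      rw [hD1 i, hof,
        Sarea_single, Tver_single]
      constructor
      · simp
      · fin_cases i <;> simp
  | inv_of i ih => exact hinv _ ih
  | mul u v ihu ihv =>
      have h := hDmul u v
      rw [map_mul, Hei.mul_def]
      constructor
      · rw [h, map_add, Sarea_shift, ihu.1, ihv.1, ihv.2, ← Psi_a]
        show _ = (Psi u).s + (Psi v).s + (Psi u).a 0 * (Psi v).a 1
        ring
      · rw [h, map_add, Tver_shift, ihu.2, ihv.2]
        show _ = ((Psi u).a + (Psi v).a) 1
        simp

end Dlemmas

lemma Hei.central_of_fst_zero {z : Hei} (hz : z.a = 0) (g : Hei) : Commute z g := by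
  show z * g = g * z
  rw [Hei.mul_def, Hei.mul_def, hz]
  ext j
  · show ((0 : Z2) + g.a) j = (g.a + (0 : Z2)) j
    simp
  · show z.s + g.s + (0 : Z2) 0 * g.a 1 = g.s + z.s + g.a 0 * (0 : Z2) 1
    simp; ring

lemma Hei.commutator_fst (g h : Hei) : ⁅g, h⁆.a = 0 := by
  rw [commutatorElement_def, Hei.inv_def, Hei.inv_def, Hei.mul_def, Hei.mul_def, Hei.mul_def]
  show g.a + h.a + -g.a + -h.a = 0
  abel

lemma Hei_lcs2 : (⊤ : Subgroup Hei).lowerCentralSeries 2 = ⊥ := by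
  apply lowerCentralSeries_succ_eq_bot
  rw [lowerCentralSeries_one]
  rw [commutator, Subgroup.commutator_le]
  intro g _ h _
  rw [Subgroup.mem_center_iff]
  intro k
  exact (Hei.central_of_fst_zero (Hei.commutator_fst g h) k).symm

lemma Psi_lcs2 {w : FreeGroup (Fin 2)} (hw : w ∈ (⊤ : Subgroup (FreeGroup (Fin 2))).lowerCentralSeries 2) :
    Psi w = 1 := by
  have : Psi w ∈ (⊤ : Subgroup Hei).lowerCentralSeries 2 :=
    lowerCentralSeries.map Psi 2 ⟨w, hw, rfl⟩
  rwa [Hei_lcs2, Subgroup.mem_bot] at this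

namespace HeisNF

abbrev F2 := FreeGroup (Fin 2)
abbrev N : Subgroup F2 := (⊤ : Subgroup F2).lowerCentralSeries 2
abbrev G := F2 ⧸ (N)
abbrev π : F2 →* G := QuotientGroup.mk' N
noncomputable abbrev x : G := π (FreeGroup.of (0 : Fin 2))
noncomputable abbrev y : G := π (FreeGroup.of (1 : Fin 2))
noncomputable def c : G := ⁅x, y⁆

lemma c_def : c = ⁅x, y⁆ := rfl

lemma comm_central (a b : F2) (g : G) : Commute ⁅π a, π b⁆ g := by
  obtain ⟨u, rfl⟩ := QuotientGroup.mk'_surjective N g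
  rw [← commutatorElement_eq_one_iff_commute, ← map_commutatorElement,
    ← map_commutatorElement, QuotientGroup.mk'_apply, QuotientGroup.eq_one_iff]
  show _ ∈ (⊤ : Subgroup F2).lowerCentralSeries (1 + 1)
  rw [Subgroup.lowerCentralSeries_succ]
  apply Subgroup.commutator_mem_commutator
  · rw [lowerCentralSeries_one]
    exact Subgroup.commutator_mem_commutator (Subgroup.mem_top a) (Subgroup.mem_top b)
  · exact Subgroup.mem_top u

lemma hc (g : G) : Commute c g := by rw [c_def]; exact comm_central _ _ g

lemma yx : y * x = x * y * c⁻¹ := by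
  have h : c * (y * x) = x * y := by
    rw [c_def, commutatorElement_def]; group
  calc y * x = c⁻¹ * (c * (y * x)) := by group
    _ = c⁻¹ * (x * y) := by rw [h]
    _ = x * y * c⁻¹ := (hc (x * y)).inv_left.eq

lemma yxinv : y * x⁻¹ = x⁻¹ * y * c := by
  have h := yx
  have h2 : x⁻¹ * y = y * x⁻¹ * c⁻¹ := by
    calc x⁻¹ * y = x⁻¹ * (y * x) * x⁻¹ := by group
      _ = x⁻¹ * (x * y * c⁻¹) * x⁻¹ := by rw [h]
      _ = y * (c⁻¹ * x⁻¹) := by group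
      _ = y * (x⁻¹ * c⁻¹) := by rw [(hc x⁻¹).inv_left.eq]
      _ = y * x⁻¹ * c⁻¹ := by group
  calc y * x⁻¹ = (y * x⁻¹ * c⁻¹) * c := by group
    _ = x⁻¹ * y * c := by rw [← h2]



lemma A' : ∀ a : ℤ, ∃ e : ℤ, y * x ^ a = x ^ a * y * c ^ e := by
  intro a
  induction a using Int.induction_on with
  | zero => exact ⟨0, by simp only [zpow_zero, mul_one, one_mul]⟩
  | succ n ih =>
      obtain ⟨e, ih⟩ := ih
      refine ⟨e - 1, ?_⟩
      have h1 : c ^ e * x = x * c ^ e := ((hc x).zpow_left e).eq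
      calc y * x ^ ((n : ℤ) + 1) = (y * x ^ (n : ℤ)) * x := by group
        _ = x ^ (n : ℤ) * y * (c ^ e * x) := by rw [ih]; group
        _ = x ^ (n : ℤ) * (y * x) * c ^ e := by rw [h1]; group
        _ = x ^ (n : ℤ) * (x * y * c⁻¹) * c ^ e := by rw [yx]
        _ = x ^ ((n : ℤ) + 1) * y * c ^ (e - 1) := by group
  | pred n ih =>
      obtain ⟨e, ih⟩ := ih
      refine ⟨e + 1, ?_⟩
      have h1 : c ^ e * x⁻¹ = x⁻¹ * c ^ e := ((hc x⁻¹).zpow_left e).eq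
      calc y * x ^ (-(n : ℤ) - 1) = (y * x ^ (-(n : ℤ))) * x⁻¹ := by group
        _ = x ^ (-(n : ℤ)) * y * (c ^ e * x⁻¹) := by rw [ih]; group
        _ = x ^ (-(n : ℤ)) * (y * x⁻¹) * c ^ e := by rw [h1]; group
        _ = x ^ (-(n : ℤ)) * (x⁻¹ * y * c) * c ^ e := by rw [yxinv]
        _ = x ^ (-(n : ℤ) - 1) * y * c ^ (e + 1) := by group

lemma swap' : ∀ b a : ℤ, ∃ e : ℤ, y ^ b * x ^ a = x ^ a * y ^ b * c ^ e := by
  intro b a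
  induction b using Int.induction_on with
  | zero => exact ⟨0, by simp only [zpow_zero, mul_one, one_mul]⟩
  | succ n ih =>
      obtain ⟨e, ih⟩ := ih
      obtain ⟨f, hf⟩ := A' a
      refine ⟨e + f, ?_⟩
      have h1 : c ^ e * y = y * c ^ e := ((hc y).zpow_left e).eq
      calc y ^ ((n : ℤ) + 1) * x ^ a = y ^ (n : ℤ) * (y * x ^ a) := by group
        _ = y ^ (n : ℤ) * (x ^ a * y * c ^ f) := by rw [hf]
        _ = (y ^ (n : ℤ) * x ^ a) * y * c ^ f := by group
        _ = x ^ a * y ^ (n : ℤ) * (c ^ e * y) * c ^ f := by rw [ih]; group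
        _ = x ^ a * y ^ (n : ℤ) * (y * c ^ e) * c ^ f := by rw [h1]
        _ = x ^ a * y ^ ((n : ℤ) + 1) * c ^ (e + f) := by group
  | pred n ih =>
      obtain ⟨e, ih⟩ := ih
      obtain ⟨f, hf⟩ := A' a
      -- y⁻¹ * x ^ a = x ^ a * y⁻¹ * c ^ (-f), derived from hf
      have hinv : y⁻¹ * x ^ a = x ^ a * y⁻¹ * c ^ (-f) := by
        have h2 : c ^ f * y⁻¹ = y⁻¹ * c ^ f := ((hc y⁻¹).zpow_left f).eq
        have step : x ^ a * y⁻¹ = y⁻¹ * x ^ a * c ^ f := by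
          calc x ^ a * y⁻¹ = y⁻¹ * (y * x ^ a) * y⁻¹ := by group
            _ = y⁻¹ * (x ^ a * y * c ^ f) * y⁻¹ := by rw [hf]
            _ = y⁻¹ * x ^ a * y * (c ^ f * y⁻¹) := by group
            _ = y⁻¹ * x ^ a * y * (y⁻¹ * c ^ f) := by rw [h2]
            _ = y⁻¹ * x ^ a * c ^ f := by group
        rw [step]; group
      refine ⟨e - f, ?_⟩
      have h1 : c ^ e * y⁻¹ = y⁻¹ * c ^ e := ((hc y⁻¹).zpow_left e).eq
      calc y ^ (-(n : ℤ) - 1) * x ^ a = y ^ (-(n : ℤ)) * (y⁻¹ * x ^ a) := by group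
        _ = y ^ (-(n : ℤ)) * (x ^ a * y⁻¹ * c ^ (-f)) := by rw [hinv]
        _ = (y ^ (-(n : ℤ)) * x ^ a) * y⁻¹ * c ^ (-f) := by group
        _ = x ^ a * y ^ (-(n : ℤ)) * (c ^ e * y⁻¹) * c ^ (-f) := by rw [ih]; group
        _ = x ^ a * y ^ (-(n : ℤ)) * (y⁻¹ * c ^ e) * c ^ (-f) := by rw [h1]
        _ = x ^ a * y ^ (-(n : ℤ) - 1) * c ^ (e - f) := by group

lemma normal_form (w : F2) : ∃ a b k : ℤ, π w = x ^ a * y ^ b * c ^ k := by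
  induction w using FreeGroup.induction_on with
  | C1 => exact ⟨0, 0, 0, by simp only [map_one, zpow_zero, mul_one]⟩
  | of i =>
      fin_cases i
      · exact ⟨1, 0, 0, by simp; rfl⟩
      · exact ⟨0, 1, 0, by simp; rfl⟩
  | inv_of i ih =>
      fin_cases i
      · exact ⟨-1, 0, 0, by simp; rfl⟩
      · exact ⟨0, -1, 0, by simp; rfl⟩
  | mul u v ihu ihv =>
      obtain ⟨a, b, k, hu⟩ := ihu
      obtain ⟨a', b', k', hv⟩ := ihv
      obtain ⟨e, hs⟩ := swap' b a'
      refine ⟨a + a', b + b', e + k + k', ?_⟩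
      have h1 : c ^ k * x ^ a' = x ^ a' * c ^ k := ((hc (x ^ a')).zpow_left k).eq
      have h2 : c ^ k * y ^ b' = y ^ b' * c ^ k := ((hc (y ^ b')).zpow_left k).eq
      have h3 : c ^ e * y ^ b' = y ^ b' * c ^ e := ((hc (y ^ b')).zpow_left e).eq
      rw [map_mul, hu, hv]
      calc x ^ a * y ^ b * c ^ k * (x ^ a' * y ^ b' * c ^ k')
          = x ^ a * y ^ b * (c ^ k * x ^ a') * y ^ b' * c ^ k' := by group
        _ = x ^ a * y ^ b * (x ^ a' * c ^ k) * y ^ b' * c ^ k' := by rw [h1]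
        _ = x ^ a * (y ^ b * x ^ a') * (c ^ k * y ^ b') * c ^ k' := by group
        _ = x ^ a * (x ^ a' * y ^ b * c ^ e) * (y ^ b' * c ^ k) * c ^ k' := by rw [hs, h2]
        _ = x ^ a * x ^ a' * y ^ b * (c ^ e * y ^ b') * c ^ k * c ^ k' := by group
        _ = x ^ a * x ^ a' * y ^ b * (y ^ b' * c ^ e) * c ^ k * c ^ k' := by rw [h3]
        _ = x ^ (a + a') * y ^ (b + b') * c ^ (e + k + k') := by group


end HeisNF

lemma Hei_zpow_vec (v : Z2) (hv : v 0 * v 1 = 0) : ∀ m : ℤ, (⟨v, 0⟩ : Hei) ^ m = ⟨m • v, 0⟩ := by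
  have hinv : (⟨v, 0⟩ : Hei)⁻¹ = ⟨-v, 0⟩ := by
    rw [Hei.inv_def]; ext j
    · rfl
    · show -0 + v 0 * v 1 = 0; rw [hv]; ring
  intro m
  induction m using Int.induction_on with
  | zero => rw [zpow_zero]; ext j
            · show (0 : Z2) j = ((0 : ℤ) • v) j; simp
            · rfl
  | succ n ih =>
      rw [zpow_add_one, ih, Hei.mul_def]
      ext j
      · show ((n : ℤ) • v + v) j = (((n : ℤ) + 1) • v) j
        simp [add_smul]; ring
      · show 0 + 0 + ((n : ℤ) • v) 0 * v 1 = 0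
        have : ((n : ℤ) • v) 0 = (n : ℤ) * v 0 := rfl
        rw [this, mul_assoc, hv]; ring
  | pred n ih =>
      rw [zpow_sub_one, ih, hinv, Hei.mul_def]
      ext j
      · show ((-n : ℤ) • v + -v) j = ((-(n : ℤ) - 1) • v) j
        simp [sub_smul]; ring
      · show 0 + 0 + ((-n : ℤ) • v) 0 * (-v) 1 = 0
        have h1 : ((-n : ℤ) • v) 0 = (-n : ℤ) * v 0 := rfl
        have h2 : (-v) 1 = -(v 1) := rfl
        rw [h1, h2]
        have : (-n : ℤ) * v 0 * -v 1 = (n : ℤ) * (v 0 * v 1) := by ring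
        rw [this, hv]; ring

lemma Hei_zpow_cen (s : ℤ) : ∀ m : ℤ, (⟨0, s⟩ : Hei) ^ m = ⟨0, m * s⟩ := by
  have hinv : (⟨(0 : Z2), s⟩ : Hei)⁻¹ = ⟨0, -s⟩ := by
    rw [Hei.inv_def]; ext j
    · show (-(0 : Z2)) j = (0 : Z2) j; simp
    · show -s + (0 : Z2) 0 * (0 : Z2) 1 = -s; simp
  intro m
  induction m using Int.induction_on with
  | zero => rw [zpow_zero]; ext j
            · rfl
            · show (0 : ℤ) = (0 : ℤ) * s; ring
  | succ n ih =>
      rw [zpow_add_one, ih, Hei.mul_def]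
      ext j
      · show ((0 : Z2) + 0) j = (0 : Z2) j; simp
      · show (n : ℤ) * s + s + (0 : Z2) 0 * (0 : Z2) 1 = ((n : ℤ) + 1) * s
        simp; ring
  | pred n ih =>
      rw [zpow_sub_one, ih, hinv, Hei.mul_def]
      ext j
      · show ((0 : Z2) + 0) j = (0 : Z2) j; simp
      · show (-n : ℤ) * s + -s + (0 : Z2) 0 * (0 : Z2) 1 = (-(n : ℤ) - 1) * s
        simp; ring

lemma Hei_comm_gen :
    ⁅(⟨Pi.single 0 1, 0⟩ : Hei), (⟨Pi.single 1 1, 0⟩ : Hei)⁆ = ⟨0, 1⟩ := by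
  rw [commutatorElement_def, Hei.inv_def, Hei.inv_def, Hei.mul_def, Hei.mul_def, Hei.mul_def]
  ext j
  · show (Pi.single 0 1 + Pi.single 1 1 + -Pi.single 0 1 + -Pi.single 1 1 : Z2) j = (0 : Z2) j
    simp
  · show 0 + 0 + (Pi.single 0 1 : Z2) 0 * (Pi.single 1 1 : Z2) 1 +
        (-0 + (Pi.single 0 1 : Z2) 0 * (Pi.single 0 1 : Z2) 1) +
        (Pi.single 0 1 + Pi.single 1 1 : Z2) 0 * (-Pi.single 0 1 : Z2) 1 +
        (-0 + (Pi.single 1 1 : Z2) 0 * (Pi.single 1 1 : Z2) 1) +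
        (Pi.single 0 1 + Pi.single 1 1 + -Pi.single 0 1 : Z2) 0 * (-Pi.single 1 1 : Z2) 1 = 1
    norm_num [Pi.single_apply]

lemma toAdd_eq_zero' {w : Multiplicative Z2} : Multiplicative.toAdd w = 0 ↔ w = 1 :=
  ⟨fun h => by simpa using congrArg Multiplicative.ofAdd h, fun h => by rw [h]; rfl⟩


/-- A word `w ∈ F₂` lies in `γ₃(F₂)` (i.e. represents the identity of the discrete
Heisenberg group, the free two-step nilpotent group on two generators) iff the path it
traces on the lattice is closed (`φ w = 0` in `ℤ²`) and the algebraic (oriented) area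
enclosed by this closed path is zero (`S(D w) = 0`). -/
theorem heisenberg_loop_criterion
    (D : FreeGroup (Fin 2) → C1Z2)
    (hD1 : ∀ i : Fin 2, D (FreeGroup.of i) = Finsupp.single ((0 : Z2), i) 1)
    (hDmul : ∀ u v : FreeGroup (Fin 2),
      D (u * v) = D u + shiftZ (Multiplicative.toAdd (phiZ u)) (D v)) :
    ∀ w : FreeGroup (Fin 2),
      w ∈ Subgroup.lowerCentralSeries (⊤ : Subgroup (FreeGroup (Fin 2))) 2 ↔
        (phiZ w = 1 ∧ Sarea (D w) = 0) := by
  intro w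
  have bridge : Psi w = 1 ↔ (phiZ w = 1 ∧ Sarea (D w) = 0) := by
    obtain ⟨hS, _⟩ := D_key D hD1 hDmul w
    constructor
    · intro h
      have ha := congrArg Hei.a h
      have hs := congrArg Hei.s h
      rw [Psi_a] at ha
      refine ⟨toAdd_eq_zero'.mp ha, ?_⟩
      rw [hS, hs]; rfl
    · rintro ⟨h1, h2⟩
      ext j
      · show (Psi w).a j = (0 : Z2) j
        rw [Psi_a, h1]; rfl
      · show (Psi w).s = 0
        rw [← hS, h2]
  constructor
  · intro hw
    exact bridge.mp (Psi_lcs2 hw)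
  · rintro ⟨h1, h2⟩
    have hps : Psi w = 1 := bridge.mpr ⟨h1, h2⟩
    obtain ⟨a, b, k, hnf⟩ := HeisNF.normal_form w
    set t : FreeGroup (Fin 2) :=
      (FreeGroup.of (0 : Fin 2)) ^ a * (FreeGroup.of (1 : Fin 2)) ^ b *
        (⁅FreeGroup.of (0 : Fin 2), FreeGroup.of (1 : Fin 2)⁆ : FreeGroup (Fin 2)) ^ k with ht
    have hcc : HeisNF.π (⁅FreeGroup.of (0 : Fin 2), FreeGroup.of (1 : Fin 2)⁆ : FreeGroup (Fin 2)) =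
        ⁅HeisNF.π (FreeGroup.of (0 : Fin 2)), HeisNF.π (FreeGroup.of (1 : Fin 2))⁆ := by
      rw [commutatorElement_def, commutatorElement_def, map_mul, map_mul, map_mul,
        map_inv, map_inv]
    have hπt : HeisNF.π t = HeisNF.x ^ a * HeisNF.y ^ b * HeisNF.c ^ k := by
      rw [ht, map_mul, map_mul, map_zpow, map_zpow, map_zpow, hcc, HeisNF.c_def]
    have hker : w⁻¹ * t ∈ (⊤ : Subgroup (FreeGroup (Fin 2))).lowerCentralSeries 2 := by
      have h3 : HeisNF.π (w⁻¹ * t) = 1 := by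
        rw [map_mul, map_inv, hnf, hπt]; group
      exact (QuotientGroup.eq_one_iff _).mp h3
    have hPsit : Psi t = 1 := by
      have h3 := Psi_lcs2 hker
      rw [map_mul, map_inv, hps] at h3
      simpa using h3
    -- compute Psi t explicitly
    have e0 : Psi (FreeGroup.of (0 : Fin 2)) = ⟨Pi.single 0 1, 0⟩ := FreeGroup.lift_apply_of
    have e1 : Psi (FreeGroup.of (1 : Fin 2)) = ⟨Pi.single 1 1, 0⟩ := FreeGroup.lift_apply_of
    have hv0 : (Pi.single 0 1 : Z2) 0 * (Pi.single 0 1 : Z2) 1 = 0 := by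
      norm_num [Pi.single_apply]
    have hv1 : (Pi.single 1 1 : Z2) 0 * (Pi.single 1 1 : Z2) 1 = 0 := by
      norm_num [Pi.single_apply]
    have hcalc : Psi t = ⟨a • (Pi.single 0 1 : Z2) + b • (Pi.single 1 1 : Z2), a * b + k⟩ := by
      have hcc2 : Psi (⁅FreeGroup.of (0 : Fin 2), FreeGroup.of (1 : Fin 2)⁆ : FreeGroup (Fin 2)) =
          ⁅Psi (FreeGroup.of (0 : Fin 2)), Psi (FreeGroup.of (1 : Fin 2))⁆ := by
        rw [commutatorElement_def, commutatorElement_def, map_mul, map_mul, map_mul,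
          map_inv, map_inv]
      rw [ht, map_mul, map_mul, map_zpow, map_zpow, map_zpow, hcc2,
        e0, e1, Hei_comm_gen, Hei_zpow_vec _ hv0, Hei_zpow_vec _ hv1, Hei_zpow_cen,
        Hei.mul_def, Hei.mul_def]
      ext j
      · show (a • (Pi.single 0 1 : Z2) + b • (Pi.single 1 1 : Z2) + (0 : Z2)) j =
            (a • (Pi.single 0 1 : Z2) + b • (Pi.single 1 1 : Z2)) j
        simp
      · show (0 : ℤ) + 0 + (a • (Pi.single 0 1 : Z2)) 0 * (b • (Pi.single 1 1 : Z2)) 1 +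
            k * 1 +
            (a • (Pi.single 0 1 : Z2) + b • (Pi.single 1 1 : Z2)) 0 * (0 : Z2) 1 = a * b + k
        have h4 : (a • (Pi.single 0 1 : Z2)) 0 = a := by
          simp [Pi.smul_apply, smul_eq_mul, Pi.single_apply]
        have h5 : (b • (Pi.single 1 1 : Z2)) 1 = b := by
          simp [Pi.smul_apply, smul_eq_mul, Pi.single_apply]
        have h6 : ((0 : Z2)) 1 = 0 := rfl
        rw [h4, h5, h6]; ring
    rw [hPsit] at hcalc
    have ha := congrArg Hei.a hcalc
    have hs := congrArg Hei.s hcalc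
    have ha0 : a = 0 := by
      have := congrFun ha 0
      simpa [Pi.single_apply, Hei.one_def] using this.symm
    have hb0 : b = 0 := by
      have := congrFun ha 1
      simpa [Pi.single_apply, Hei.one_def] using this.symm
    have hk0 : k = 0 := by
      have : (0 : ℤ) = a * b + k := hs
      rw [ha0, hb0] at this; linarith
    rw [ha0, hb0, hk0] at hnf
    simp only [zpow_zero, mul_one, one_mul] at hnf
    exact (QuotientGroup.eq_one_iff w).mp hnf
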